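/- arXiv:1304.5618 — 2 statements merged into one kernel-verified Lean document; each statement's English description precedes it below -/
import Mathlib

section
/- Let W_s' = {D ∈ W_s : div D = 0} and W_s'' = {f𝔇 : f ∈ O_s}. If m − n + s ≢ 0 (mod p) then W_s = W_s' ⊕ W_s'' as vector spaces, while if m − n + s ≡ 0 (mod p) then W_s'' ⊆ W_s'. -/
open Finset

namespace Cartan

/-- Monomial index set for the divided power superalgebra `O(m,n)`:
a multi-exponent `α : Fin m → Fin p` (divided powers truncated at `p-1`)
together with a subset of the odd variables. -/
abbrev Mon (p m n : ℕ) := (Fin m → Fin p) × Finset (Fin n)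

/-- The divided power superalgebra `O(m,n)` realized as coefficient functions on monomials. -/
abbrev O (F : Type*) [Field F] (p m n : ℕ) := Mon p m n → F

/-- The Witt superalgebra `W(m,n)` realized as tuples of coefficients:
`D : W` represents `∑ i, D i · ∂ i`. -/
abbrev W (F : Type*) [Field F] (p m n : ℕ) := Fin (m + n) → O F p m n

variable {F : Type*} [Field F] {p m n : ℕ}

/-- `ℤ₂`-parity of a monomial. -/
def parMon (μ : Mon p m n) : ZMod 2 := (μ.2.card : ZMod 2)

/-- `ℤ`-degree of a monomial (each variable has degree 1). -/
def zdMon (μ : Mon p m n) : ℕ := (∑ i, (μ.1 i : ℕ)) + μ.2.card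

/-- Parity of the index `i`: even if `i < m`, odd otherwise. -/
def parIdx (m : ℕ) {k : ℕ} (i : Fin k) : ZMod 2 := if (i : ℕ) < m then 0 else 1

/-- The constant function `1 ∈ O(m,n)`. -/
def oneO (F : Type*) [Field F] (p m n : ℕ) [NeZero p] : O F p m n :=
  fun μ => if μ.1 = 0 ∧ μ.2 = (∅ : Finset (Fin n)) then 1 else 0

/-- Koszul sign for multiplying exterior monomials `x^s · x^t`. -/
def extSign {n : ℕ} (s t : Finset (Fin n)) : ℤ :=
  (-1) ^ ∑ i ∈ t, (s.filter fun j => i < j).card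

/-- Multiplication of the divided power superalgebra `O(m,n)`:
`x^(α)x^u · x^(β)x^v = (Koszul sign) · ∏ binom(α+β,α) · x^(α+β) x^(u∪v)`. -/
def mulO [NeZero p] (f g : O F p m n) : O F p m n := fun μ =>
  ∑ ν : Mon p m n, ∑ κ : Mon p m n,
    if (∀ i, (ν.1 i : ℕ) + (κ.1 i : ℕ) = (μ.1 i : ℕ)) ∧ ν.2 ∩ κ.2 = ∅ ∧ ν.2 ∪ κ.2 = μ.2 then
      ((extSign ν.2 κ.2 : ℤ) : F) * (∏ i, (((μ.1 i : ℕ).choose (ν.1 i : ℕ) : ℕ) : F))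
        * f ν * g κ
    else 0

/-- The even partial superderivation `∂_i`, `i ≤ m`, on `O(m,n)`. -/
def dEv [NeZero p] (i : Fin m) (f : O F p m n) : O F p m n := fun μ =>
  if h : (μ.1 i : ℕ) + 1 < p then f (Function.update μ.1 i ⟨(μ.1 i : ℕ) + 1, h⟩, μ.2) else 0

/-- The odd partial superderivation `∂_{m+i}` on `O(m,n)`. -/
def dOd (i : Fin n) (f : O F p m n) : O F p m n := fun μ =>
  if i ∈ μ.2 then 0
  else ((-1 : F)) ^ (μ.2.filter fun j => j < i).card * f (μ.1, insert i μ.2)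

/-- The partial superderivation `∂_i`, `i ∈ I = {1,…,m+n}`. -/
def pd [NeZero p] (i : Fin (m + n)) (f : O F p m n) : O F p m n :=
  Sum.elim (fun j => dEv j f) (fun j => dOd j f) (finSumFinEquiv.symm i)

/-- The variable `x_i` as an element of `O(m,n)`. -/
def xVar [NeZero p] (i : Fin (m + n)) : O F p m n := fun μ =>
  if h : (i : ℕ) < m then
    (if μ.1 = Pi.single (⟨i, h⟩ : Fin m) 1 ∧ μ.2 = (∅ : Finset (Fin n)) then 1 else 0)
  else
    (if μ.1 = 0 ∧ μ.2 = {(⟨(i : ℕ) - m, by have := i.isLt; omega⟩ : Fin n)} then 1 else 0)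

/-- Projection of `f ∈ O(m,n)` onto its parity-`b` component. -/
def projO (b : ZMod 2) (f : O F p m n) : O F p m n :=
  fun μ => if parMon μ = b then f μ else 0

/-- Projection of `D ∈ W(m,n)` onto its parity-`b` component
(the parity of `f ∂_i` is `|f| + |∂_i|`). -/
def projW (b : ZMod 2) (D : W F p m n) : W F p m n :=
  fun i => projO (b + parIdx m i) (D i)

/-- `f` is `ℤ₂`-homogeneous of parity `b`. -/
def isParO (b : ZMod 2) (f : O F p m n) : Prop := ∀ μ, f μ ≠ 0 → parMon μ = b

/-- `D` is `ℤ₂`-homogeneous of parity `b`. -/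
def isParW (b : ZMod 2) (D : W F p m n) : Prop := ∀ i, isParO (b + parIdx m i) (D i)

/-- Action of a superderivation `D = ∑ f_i ∂_i` on `g ∈ O(m,n)`: `D(g) = ∑ f_i · ∂_i(g)`. -/
def act [NeZero p] (D : W F p m n) (g : O F p m n) : O F p m n :=
  ∑ i, mulO (D i) (pd i g)

/-- Super-commutator bracket on `W(m,n)`, extended bilinearly from homogeneous components:
`[D,E] = D∘E - (-1)^{|D||E|} E∘D`, recorded via values on the generators `x_k`. -/
def bracketW [NeZero p] (D E : W F p m n) : W F p m n :=
  ∑ a : ZMod 2, ∑ b : ZMod 2,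
    (fun k => act (projW a D) (projW b E k)
      - ((-1 : F)) ^ (a * b).val • act (projW b E) (projW a D k) : W F p m n)

/-- Divergence: `div(f ∂_i) = (-1)^{|f||∂_i|} ∂_i(f)`, extended linearly. -/
def divW [NeZero p] (D : W F p m n) : O F p m n :=
  ∑ i, ∑ b : ZMod 2, ((-1 : F)) ^ (b * parIdx m i).val • pd i (projO b (D i))

/-- The Euler (degree) derivation `𝔇 = ∑ x_k ∂_k`. -/
def euler (F : Type*) [Field F] (p m n : ℕ) [NeZero p] : W F p m n := fun i => xVar i

/-- The derivation `f𝔇 = ∑ (f·x_k) ∂_k`. -/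
def fEuler [NeZero p] (f : O F p m n) : W F p m n := fun i => mulO f (xVar i)

/-- `f` is `ℤ`-homogeneous of degree `s` (i.e. `f ∈ O_s`). -/
def inO (s : ℤ) (f : O F p m n) : Prop := ∀ μ, f μ ≠ 0 → (zdMon μ : ℤ) = s

/-- `D ∈ W_s` for the standard grading (`zd(f∂_i) = zd(f) - 1`). -/
def inW (s : ℤ) (D : W F p m n) : Prop := ∀ i, inO (s + 1) (D i)

/-- The superderivation `∂_i` as an element of `W(m,n)`. -/
def delOp (F : Type*) [Field F] (p m n : ℕ) [NeZero p] (i : Fin (m + n)) : W F p m n :=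
  fun k => if k = i then oneO F p m n else 0

/-- The `ℤ`-graded component `W_s` as a submodule. -/
def Wgrade (F : Type*) [Field F] (p m n : ℕ) (s : ℤ) : Submodule F (W F p m n) where
  carrier := {D | inW s D}
  add_mem' := by
    intro a b ha hb i μ h
    by_cases h1 : a i μ = 0
    · exact hb i μ (by simpa [h1] using h)
    · exact ha i μ h1
  zero_mem' := by intro i μ h; simp at h
  smul_mem' := by
    intro c a ha i μ h
    refine ha i μ (fun h1 => h ?_)
    simp [h1]

section Aux
variable [Fact p.Prime]

lemma xEv_eq (j : Fin m) (κ : Mon p m n) : xVar (F := F) (Fin.castAdd n j) κ =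
    if κ.1 = Pi.single j 1 ∧ κ.2 = (∅ : Finset (Fin n)) then 1 else 0 := by
  have hj : ((Fin.castAdd n j : Fin (m+n)) : ℕ) < m := j.isLt
  rw [xVar, dif_pos hj]
  have : (⟨((Fin.castAdd n j : Fin (m+n)) : ℕ), hj⟩ : Fin m) = j := Fin.ext rfl
  rw [this]

lemma xOd_eq (j : Fin n) (κ : Mon p m n) : xVar (F := F) (Fin.natAdd m j) κ =
    if κ.1 = 0 ∧ κ.2 = {j} then 1 else 0 := by
  have hj : ¬ ((Fin.natAdd m j : Fin (m+n)) : ℕ) < m := by simp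
  rw [xVar, dif_neg hj]
  have : (⟨((Fin.natAdd m j : Fin (m+n)) : ℕ) - m, by have := (Fin.natAdd m j).isLt; omega⟩ : Fin n) = j := Fin.ext (by simp)
  rw [this]

lemma single_val (j : Fin m) (i : Fin m) :
    ((Pi.single j (1:Fin p) : Fin m → Fin p) i : ℕ) = if i = j then 1 else 0 := by
  have hp1 : 1 < p := (Fact.out : p.Prime).one_lt
  by_cases hij : i = j
  · subst hij; simp [Fin.val_one', Nat.mod_eq_of_lt hp1]
  · simp [Pi.single_apply, hij]

lemma mulO_xEv (f : O F p m n) (j : Fin m) (μ : Mon p m n) :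
    mulO f (xVar (Fin.castAdd n j)) μ =
      if h : 0 < (μ.1 j : ℕ) then
        ((μ.1 j : ℕ) : F) *
          f (Function.update μ.1 j ⟨(μ.1 j : ℕ) - 1,
              lt_of_le_of_lt (Nat.sub_le _ _) (μ.1 j).isLt⟩, μ.2)
      else 0 := by
  set κ₀ : Mon p m n := (Pi.single j 1, ∅) with hκ₀
  have hκ₀1 : κ₀.1 = Pi.single j 1 := rfl
  have hκ₀2 : κ₀.2 = ∅ := rfl
  rw [mulO]
  by_cases h : 0 < (μ.1 j : ℕ)
  · set a : Fin p := ⟨(μ.1 j : ℕ) - 1, lt_of_le_of_lt (Nat.sub_le _ _) (μ.1 j).isLt⟩ with ha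
    have hav : (a : ℕ) = (μ.1 j : ℕ) - 1 := rfl
    set ν₀ : Mon p m n := (Function.update μ.1 j a, μ.2) with hν₀
    have hν₀1 : ν₀.1 = Function.update μ.1 j a := rfl
    have hν₀2 : ν₀.2 = μ.2 := rfl
    have key : ∀ ν : Mon p m n, (∀ i, (ν.1 i : ℕ) + ((κ₀.1 : Fin m → Fin p) i : ℕ) = μ.1 i) →
        ν.2 ∪ κ₀.2 = μ.2 → ν = ν₀ := by
      intro ν h1 h2
      have hfst : ν.1 = Function.update μ.1 j a := by
        funext i
        apply Fin.ext
        have := h1 i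
        rw [hκ₀1, single_val] at this
        by_cases hij : i = j
        · subst hij
          rw [Function.update_self, hav]
          simp only [if_pos] at this
          omega
        · rw [Function.update_of_ne hij]
          simpa [hij] using this
      have hsnd : ν.2 = μ.2 := by rw [hκ₀2] at h2; simpa using h2
      exact Prod.ext hfst hsnd
    have hzero : ∀ ν : Mon p m n, ν ≠ ν₀ → (∑ κ : Mon p m n,
        if (∀ i, (ν.1 i : ℕ) + (κ.1 i : ℕ) = (μ.1 i : ℕ)) ∧ ν.2 ∩ κ.2 = ∅ ∧ ν.2 ∪ κ.2 = μ.2 then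
          ((extSign ν.2 κ.2 : ℤ) : F) * (∏ i, (((μ.1 i : ℕ).choose (ν.1 i : ℕ) : ℕ) : F))
            * f ν * xVar (Fin.castAdd n j) κ
        else 0) = 0 := by
      intro ν hν
      refine Finset.sum_eq_zero fun κ _ => ?_
      split_ifs with hc
      · rcases eq_or_ne κ κ₀ with hk | hk
        · exact absurd (key ν (hk ▸ hc.1) (hk ▸ hc.2.2)) hν
        · rw [xEv_eq, if_neg, mul_zero]
          intro hkk
          exact hk (Prod.ext (hκ₀1 ▸ hkk.1) (hκ₀2 ▸ hkk.2))
      · rfl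
    rw [Finset.sum_eq_single ν₀ (fun ν _ hν => hzero ν hν) (by simp)]
    have hzero2 : ∀ κ : Mon p m n, κ ≠ κ₀ →
        (if (∀ i, (ν₀.1 i : ℕ) + (κ.1 i : ℕ) = (μ.1 i : ℕ)) ∧ ν₀.2 ∩ κ.2 = ∅ ∧ ν₀.2 ∪ κ.2 = μ.2 then
          ((extSign ν₀.2 κ.2 : ℤ) : F) * (∏ i, (((μ.1 i : ℕ).choose (ν₀.1 i : ℕ) : ℕ) : F))
            * f ν₀ * xVar (Fin.castAdd n j) κ
        else 0) = 0 := by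
      intro κ hk
      split_ifs with hc
      · rw [xEv_eq, if_neg, mul_zero]
        intro hkk
        exact hk (Prod.ext (hκ₀1 ▸ hkk.1) (hκ₀2 ▸ hkk.2))
      · rfl
    rw [Finset.sum_eq_single κ₀ (fun κ _ hκ => hzero2 κ hκ) (by simp)]
    have hcond : (∀ i, (ν₀.1 i : ℕ) + ((κ₀.1 : Fin m → Fin p) i : ℕ) = (μ.1 i : ℕ)) ∧
        ν₀.2 ∩ κ₀.2 = ∅ ∧ ν₀.2 ∪ κ₀.2 = μ.2 := by
      refine ⟨fun i => ?_, by rw [hν₀2, hκ₀2]; simp, by rw [hν₀2, hκ₀2]; simp⟩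
      rw [hν₀1, hκ₀1, single_val]
      by_cases hij : i = j
      · subst hij
        rw [Function.update_self, if_pos rfl, hav]
        omega
      · rw [Function.update_of_ne hij, if_neg hij, add_zero]
    rw [if_pos hcond, xEv_eq, if_pos ⟨hκ₀1, hκ₀2⟩, mul_one]
    have hsign : ((extSign ν₀.2 κ₀.2 : ℤ) : F) = 1 := by
      rw [hκ₀2]; simp [extSign]
    have hprod : (∏ i, (((μ.1 i : ℕ).choose ((ν₀.1 : Fin m → Fin p) i : ℕ) : ℕ) : F))
        = ((μ.1 j : ℕ) : F) := by
      rw [Fintype.prod_eq_single j (fun i hij => by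
        rw [hν₀1, Function.update_of_ne hij, Nat.choose_self, Nat.cast_one])]
      rw [hν₀1, Function.update_self, hav]
      obtain ⟨k, hk⟩ : ∃ k, (μ.1 j : ℕ) = k + 1 := ⟨_, (Nat.succ_pred_eq_of_pos h).symm⟩
      rw [hk]
      simp [Nat.choose_succ_self_right]
    rw [hsign, hprod, one_mul, dif_pos h, hν₀]
  · rw [dif_neg h]
    refine Finset.sum_eq_zero fun ν _ => Finset.sum_eq_zero fun κ _ => ?_
    split_ifs with hc
    · rcases eq_or_ne κ κ₀ with hk | hk
      · exfalso
        have := hc.1 j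
        rw [hk, hκ₀1, single_val, if_pos rfl] at this
        omega
      · rw [xEv_eq, if_neg, mul_zero]
        intro hkk
        exact hk (Prod.ext (hκ₀1 ▸ hkk.1) (hκ₀2 ▸ hkk.2))
    · rfl
lemma mulO_xOd (f : O F p m n) (j : Fin n) (μ : Mon p m n) :
    mulO f (xVar (Fin.natAdd m j)) μ =
      if j ∈ μ.2 then
        ((-1 : F)) ^ (μ.2.filter fun k => j < k).card * f (μ.1, μ.2.erase j)
      else 0 := by
  set κ₀ : Mon p m n := (0, {j}) with hκ₀
  have hκ₀1 : κ₀.1 = 0 := rfl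
  have hκ₀2 : κ₀.2 = {j} := rfl
  rw [mulO]
  by_cases h : j ∈ μ.2
  · set ν₀ : Mon p m n := (μ.1, μ.2.erase j) with hν₀
    have hν₀1 : ν₀.1 = μ.1 := rfl
    have hν₀2 : ν₀.2 = μ.2.erase j := rfl
    have key : ∀ ν : Mon p m n, (∀ i, (ν.1 i : ℕ) + ((κ₀.1 : Fin m → Fin p) i : ℕ) = μ.1 i) →
        ν.2 ∩ κ₀.2 = ∅ → ν.2 ∪ κ₀.2 = μ.2 → ν = ν₀ := by
      intro ν h1 h2 h3
      have hfst : ν.1 = μ.1 := by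
        funext i
        apply Fin.ext
        have := h1 i
        rw [hκ₀1] at this
        simpa using this
      have hj : j ∉ ν.2 := by
        intro hjν
        have : j ∈ ν.2 ∩ κ₀.2 := by rw [hκ₀2]; simp [hjν]
        rw [h2] at this
        simp at this
      have hsnd : ν.2 = μ.2.erase j := by
        rw [← h3, hκ₀2]
        ext k
        simp only [Finset.mem_erase, Finset.mem_union, Finset.mem_singleton]
        constructor
        · intro hk
          exact ⟨fun hkj => hj (hkj ▸ hk), Or.inl hk⟩
        · rintro ⟨hkj, hk | hk⟩
          · exact hk
          · exact absurd hk hkj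
      exact Prod.ext hfst hsnd
    have hzero : ∀ ν : Mon p m n, ν ≠ ν₀ → (∑ κ : Mon p m n,
        if (∀ i, (ν.1 i : ℕ) + (κ.1 i : ℕ) = (μ.1 i : ℕ)) ∧ ν.2 ∩ κ.2 = ∅ ∧ ν.2 ∪ κ.2 = μ.2 then
          ((extSign ν.2 κ.2 : ℤ) : F) * (∏ i, (((μ.1 i : ℕ).choose (ν.1 i : ℕ) : ℕ) : F))
            * f ν * xVar (Fin.natAdd m j) κ
        else 0) = 0 := by
      intro ν hν
      refine Finset.sum_eq_zero fun κ _ => ?_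
      split_ifs with hc
      · rcases eq_or_ne κ κ₀ with hk | hk
        · exact absurd (key ν (hk ▸ hc.1) (hk ▸ hc.2.1) (hk ▸ hc.2.2)) hν
        · rw [xOd_eq, if_neg, mul_zero]
          intro hkk
          exact hk (Prod.ext (hκ₀1 ▸ hkk.1) (hκ₀2 ▸ hkk.2))
      · rfl
    rw [Finset.sum_eq_single ν₀ (fun ν _ hν => hzero ν hν) (by simp)]
    have hzero2 : ∀ κ : Mon p m n, κ ≠ κ₀ →
        (if (∀ i, (ν₀.1 i : ℕ) + (κ.1 i : ℕ) = (μ.1 i : ℕ)) ∧ ν₀.2 ∩ κ.2 = ∅ ∧ ν₀.2 ∪ κ.2 = μ.2 then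
          ((extSign ν₀.2 κ.2 : ℤ) : F) * (∏ i, (((μ.1 i : ℕ).choose (ν₀.1 i : ℕ) : ℕ) : F))
            * f ν₀ * xVar (Fin.natAdd m j) κ
        else 0) = 0 := by
      intro κ hk
      split_ifs with hc
      · rw [xOd_eq, if_neg, mul_zero]
        intro hkk
        exact hk (Prod.ext (hκ₀1 ▸ hkk.1) (hκ₀2 ▸ hkk.2))
      · rfl
    rw [Finset.sum_eq_single κ₀ (fun κ _ hκ => hzero2 κ hκ) (by simp)]
    have hcond : (∀ i, (ν₀.1 i : ℕ) + ((κ₀.1 : Fin m → Fin p) i : ℕ) = (μ.1 i : ℕ)) ∧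
        ν₀.2 ∩ κ₀.2 = ∅ ∧ ν₀.2 ∪ κ₀.2 = μ.2 := by
      refine ⟨fun i => by rw [hν₀1, hκ₀1]; simp, ?_, ?_⟩
      · rw [hν₀2, hκ₀2]
        ext k
        simp only [Finset.mem_inter, Finset.mem_erase, Finset.mem_singleton,
          Finset.notMem_empty, iff_false]
        rintro ⟨⟨hkj, _⟩, hkj2⟩
        exact hkj hkj2
      · rw [hν₀2, hκ₀2]
        ext k
        simp only [Finset.mem_union, Finset.mem_erase, Finset.mem_singleton]
        constructor
        · rintro (⟨_, hk⟩ | rfl)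
          · exact hk
          · exact h
        · intro hk
          rcases eq_or_ne k j with rfl | hkj
          · exact Or.inr rfl
          · exact Or.inl ⟨hkj, hk⟩
    rw [if_pos hcond, xOd_eq, if_pos ⟨hκ₀1, hκ₀2⟩, mul_one]
    have hprod : (∏ i, (((μ.1 i : ℕ).choose ((ν₀.1 : Fin m → Fin p) i : ℕ) : ℕ) : F)) = 1 := by
      rw [hν₀1]
      simp [Nat.choose_self]
    have hsign : ((extSign ν₀.2 κ₀.2 : ℤ) : F) =
        ((-1 : F)) ^ (μ.2.filter fun k => j < k).card := by
      rw [hν₀2, hκ₀2, extSign]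
      have hf : (μ.2.erase j).filter (fun k => j < k) = μ.2.filter (fun k => j < k) := by
        ext k
        simp only [Finset.mem_filter, Finset.mem_erase]
        constructor
        · rintro ⟨⟨_, hk⟩, hlt⟩; exact ⟨hk, hlt⟩
        · rintro ⟨hk, hlt⟩; exact ⟨⟨fun hkj => by subst hkj; exact lt_irrefl _ hlt, hk⟩, hlt⟩
      rw [Finset.sum_singleton, hf]
      push_cast
      ring
    rw [hprod, mul_one, hsign, if_pos h, hν₀]
  · rw [if_neg h]
    refine Finset.sum_eq_zero fun ν _ => Finset.sum_eq_zero fun κ _ => ?_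
    split_ifs with hc
    · rcases eq_or_ne κ κ₀ with hk | hk
      · exfalso
        apply h
        rw [← hc.2.2, hk, hκ₀2]
        simp
      · rw [xOd_eq, if_neg, mul_zero]
        intro hkk
        exact hk (Prod.ext (hκ₀1 ▸ hkk.1) (hκ₀2 ▸ hkk.2))
    · rfl
lemma dEv_mul_x [CharP F p] (f : O F p m n) (j : Fin m) (μ : Mon p m n) :
    dEv j (mulO f (xVar (Fin.castAdd n j))) μ = (((μ.1 j : ℕ) + 1 : ℕ) : F) * f μ := by
  rw [dEv]
  split_ifs with h
  · rw [mulO_xEv]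
    have h1 : (((Function.update μ.1 j ⟨(μ.1 j : ℕ) + 1, h⟩, μ.2) : Mon p m n).1 j : ℕ)
        = (μ.1 j : ℕ) + 1 := by simp
    rw [dif_pos (by rw [h1]; omega)]
    congr 1
    · rw [h1]
    · refine congrArg f (Prod.ext ?_ rfl)
      show Function.update (Function.update μ.1 j _) j _ = μ.1
      rw [Function.update_idem]
      rw [show (⟨((((Function.update μ.1 j ⟨(μ.1 j : ℕ) + 1, h⟩, μ.2) : Mon p m n).1 j : ℕ)) - 1, _⟩ : Fin p) = μ.1 j from Fin.ext (by simp)]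
      exact Function.update_eq_self _ _
  · have hq : ((μ.1 j : ℕ) + 1 : ℕ) = p := by have := (μ.1 j).isLt; omega
    rw [hq, CharP.cast_eq_zero F p, zero_mul]

lemma dOd_mul_x (f : O F p m n) (j : Fin n) (μ : Mon p m n) :
    dOd j (mulO f (xVar (Fin.natAdd m j))) μ =
      if j ∈ μ.2 then 0 else ((-1 : F)) ^ μ.2.card * f μ := by
  rw [dOd]
  split_ifs with h
  · rfl
  · rw [mulO_xOd, if_pos (Finset.mem_insert_self j μ.2)]
    have he : (insert j μ.2).erase j = μ.2 := Finset.erase_insert h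
    have hfil : (insert j μ.2).filter (fun k => j < k) = μ.2.filter (fun k => j < k) := by
      rw [Finset.filter_insert, if_neg (lt_irrefl j)]
    rw [he, hfil, ← mul_assoc, ← pow_add]
    congr 2
    have hsplit : (μ.2.filter (fun k => ¬ k < j)) = μ.2.filter (fun k => j < k) := by
      ext k
      simp only [Finset.mem_filter, not_lt]
      constructor
      · rintro ⟨hk, hle⟩
        exact ⟨hk, lt_of_le_of_ne hle (fun hjk => h (hjk ▸ hk))⟩
      · rintro ⟨hk, hlt⟩
        exact ⟨hk, le_of_lt hlt⟩
    rw [← hsplit, Finset.card_filter_add_card_filter_not]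

lemma neg_one_zmodval (k : ℕ) : ((-1 : F)) ^ ((k : ZMod 2)).val = (-1 : F) ^ k := by
  rw [ZMod.val_natCast]
  conv_rhs => rw [← Nat.mod_add_div k 2, pow_add, pow_mul]
  norm_num

lemma dEv_proj_sum (j : Fin m) (g : O F p m n) (μ : Mon p m n) :
    ∑ b : ZMod 2, dEv j (projO b g) μ = dEv j g μ := by
  simp only [dEv]
  split_ifs with h
  · simp only [projO, Fintype.sum_ite_eq]
  · simp

lemma dOd_proj_sum (j : Fin n) (g : O F p m n) (μ : Mon p m n) :
    ∑ b : ZMod 2, ((-1 : F)) ^ (b : ZMod 2).val * dOd j (projO b g) μ =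
      ((-1 : F)) ^ ((μ.2.card + 1 : ℕ)) * dOd j g μ := by
  simp only [dOd]
  split_ifs with h
  · simp
  · simp only [projO]
    have hpar : parMon ((μ.1, insert j μ.2) : Mon p m n) = ((μ.2.card + 1 : ℕ) : ZMod 2) := by
      simp [parMon, Finset.card_insert_of_notMem h]
    simp only [mul_ite, mul_zero, hpar, Fintype.sum_ite_eq, neg_one_zmodval]
lemma divW_fEuler [CharP F p] (f : O F p m n) (μ : Mon p m n) :
    divW (fEuler f) μ = ((((m : ℤ) - (n : ℤ) + (zdMon μ : ℤ)) : ℤ) : F) * f μ := by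
  have hdiv : divW (fEuler f) μ = ∑ i : Fin (m+n), ∑ b : ZMod 2,
      ((-1 : F)) ^ (b * parIdx m i).val * pd i (projO b (fEuler f i)) μ := by
    simp [divW, Finset.sum_apply, Pi.smul_apply, smul_eq_mul]
  rw [hdiv, Fin.sum_univ_add]
  have heven : ∀ j : Fin m, (∑ b : ZMod 2,
      ((-1:F)) ^ (b * parIdx m (Fin.castAdd n j)).val *
        pd (Fin.castAdd n j) (projO b (fEuler f (Fin.castAdd n j))) μ)
      = (((μ.1 j : ℕ) + 1 : ℕ) : F) * f μ := by
    intro j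
    have hp : parIdx m (Fin.castAdd n j) = 0 := if_pos j.isLt
    have hpd : ∀ g : O F p m n, pd (Fin.castAdd n j) g = dEv j g := by
      intro g; rw [pd, finSumFinEquiv_symm_apply_castAdd]; rfl
    simp only [hp, mul_zero, ZMod.val_zero, pow_zero, one_mul, hpd]
    rw [dEv_proj_sum]
    exact dEv_mul_x f j μ
  have hodd : ∀ j : Fin n, (∑ b : ZMod 2,
      ((-1:F)) ^ (b * parIdx m (Fin.natAdd m j)).val *
        pd (Fin.natAdd m j) (projO b (fEuler f (Fin.natAdd m j))) μ)
      = (if j ∈ μ.2 then 0 else -f μ) := by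
    intro j
    have hp : parIdx m (Fin.natAdd m j) = 1 := if_neg (by simp)
    have hpd : ∀ g : O F p m n, pd (Fin.natAdd m j) g = dOd j g := by
      intro g; rw [pd, finSumFinEquiv_symm_apply_natAdd]; rfl
    simp only [hp, mul_one, hpd]
    rw [dOd_proj_sum]
    rw [show fEuler f (Fin.natAdd m j) = mulO f (xVar (Fin.natAdd m j)) from rfl, dOd_mul_x]
    split_ifs with h
    · rw [mul_zero]
    · rw [← mul_assoc, ← pow_add, Odd.neg_one_pow ⟨μ.2.card, by ring⟩, neg_one_mul]
  rw [Finset.sum_congr rfl (fun j _ => heven j), Finset.sum_congr rfl (fun j _ => hodd j)]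
  have hA : (∑ j : Fin m, (((μ.1 j : ℕ) + 1 : ℕ) : F) * f μ)
      = (((∑ j, (μ.1 j : ℕ)) : ℕ) : F) * f μ + (m : F) * f μ := by
    rw [← Finset.sum_mul, ← add_mul]
    congr 1
    push_cast
    rw [Finset.sum_add_distrib, Finset.sum_const]
    simp [Finset.card_univ, nsmul_eq_mul]
  have hB : (∑ j : Fin n, (if j ∈ μ.2 then (0:F) else -f μ))
      = (μ.2.card : F) * f μ - (n : F) * f μ := by
    have hper : ∀ j : Fin n, (if j ∈ μ.2 then (0:F) else -f μ)
        = (if j ∈ μ.2 then f μ else 0) - f μ := by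
      intro j; split_ifs <;> ring
    rw [Finset.sum_congr rfl fun j _ => hper j, Finset.sum_sub_distrib, Finset.sum_const]
    have : (∑ j : Fin n, if j ∈ μ.2 then f μ else (0:F)) = μ.2.card • f μ := by
      rw [Finset.sum_ite_mem, Finset.univ_inter, Finset.sum_const]
    rw [this]
    simp only [Finset.card_univ, Fintype.card_fin, nsmul_eq_mul]
  rw [hA, hB]
  have hz : (zdMon μ : ℤ) = ((∑ j, (μ.1 j : ℕ) : ℕ) : ℤ) + (μ.2.card : ℤ) := by
    rw [zdMon]; push_cast; ring
  rw [show (((m : ℤ) - (n : ℤ) + (zdMon μ : ℤ)) : ℤ) = ((m:ℤ) - n + (((∑ j, (μ.1 j : ℕ) : ℕ) : ℤ) + μ.2.card)) from by rw [hz]]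
  push_cast
  ring
lemma projO_support {b : ZMod 2} {g : O F p m n} {μ : Mon p m n}
    (h : projO b g μ ≠ 0) : g μ ≠ 0 := by
  intro hg
  apply h
  simp [projO, hg]

lemma sum_update_val (μ1 : Fin m → Fin p) (j : Fin m) (a : Fin p) :
    (∑ i, ((Function.update μ1 j a i : Fin p) : ℕ)) + (μ1 j : ℕ)
      = (∑ i, (μ1 i : ℕ)) + (a : ℕ) := by
  have hcomp : ∀ i, ((Function.update μ1 j a i : Fin p) : ℕ)
      = Function.update (fun i => (μ1 i : ℕ)) j (a : ℕ) i := fun i =>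
    Function.apply_update (fun (_ : Fin m) (x : Fin p) => (x : ℕ)) μ1 j a i
  rw [Finset.sum_congr rfl fun i _ => hcomp i,
    Finset.sum_update_of_mem (Finset.mem_univ j),
    ← Finset.add_sum_erase _ _ (Finset.mem_univ j), Finset.erase_eq]
  omega

lemma pd_support (i : Fin (m + n)) (g : O F p m n) (μ : Mon p m n)
    (h : pd i g μ ≠ 0) :
    ∃ μ' : Mon p m n, g μ' ≠ 0 ∧ zdMon μ' = zdMon μ + 1 := by
  obtain ⟨x, rfl⟩ := finSumFinEquiv.surjective i
  cases x with
  | inl j =>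
    rw [finSumFinEquiv_apply_left, pd, finSumFinEquiv_symm_apply_castAdd, Sum.elim_inl, dEv] at h
    by_cases hlt : (μ.1 j : ℕ) + 1 < p
    · rw [dif_pos hlt] at h
      refine ⟨_, h, ?_⟩
      have := sum_update_val μ.1 j (⟨(μ.1 j : ℕ) + 1, hlt⟩ : Fin p)
      simp only [zdMon]
      simp only [Fin.val_mk] at this ⊢
      omega
    · rw [dif_neg hlt] at h
      exact absurd rfl h
  | inr j =>
    rw [finSumFinEquiv_apply_right, pd, finSumFinEquiv_symm_apply_natAdd, Sum.elim_inr, dOd] at h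
    by_cases hmem : j ∈ μ.2
    · rw [if_pos hmem] at h
      exact absurd rfl h
    · rw [if_neg hmem] at h
      have hg : g (μ.1, insert j μ.2) ≠ 0 := by
        intro hg0
        apply h
        rw [hg0, mul_zero]
      refine ⟨_, hg, ?_⟩
      simp only [zdMon, Finset.card_insert_of_notMem hmem]
      omega

lemma divW_support (D : W F p m n) (s : ℤ) (hD : inW s D) : inO s (divW D) := by
  intro μ h
  rw [divW, Finset.sum_apply] at h
  obtain ⟨i, _, hi⟩ := Finset.exists_ne_zero_of_sum_ne_zero h
  rw [Finset.sum_apply] at hi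
  obtain ⟨b, _, hb⟩ := Finset.exists_ne_zero_of_sum_ne_zero hi
  rw [Pi.smul_apply, smul_eq_mul] at hb
  have hpd : pd i (projO b (D i)) μ ≠ 0 := fun h0 => hb (by rw [h0, mul_zero])
  obtain ⟨μ', hμ'1, hμ'2⟩ := pd_support i _ μ hpd
  have := hD i μ' (projO_support hμ'1)
  omega

lemma zd_mulO_xEv {f : O F p m n} {s : ℤ} (hf : inO s f) (j : Fin m) (μ : Mon p m n)
    (h : mulO f (xVar (Fin.castAdd n j)) μ ≠ 0) : (zdMon μ : ℤ) = s + 1 := by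
  rw [mulO_xEv] at h
  by_cases hpos : 0 < (μ.1 j : ℕ)
  · rw [dif_pos hpos] at h
    have hfne : f (Function.update μ.1 j ⟨(μ.1 j : ℕ) - 1,
        lt_of_le_of_lt (Nat.sub_le _ _) (μ.1 j).isLt⟩, μ.2) ≠ 0 :=
      fun h0 => h (by rw [h0, mul_zero])
    have hs := hf _ hfne
    have hsum := sum_update_val μ.1 j (⟨(μ.1 j : ℕ) - 1,
      lt_of_le_of_lt (Nat.sub_le _ _) (μ.1 j).isLt⟩ : Fin p)
    simp only [zdMon, Fin.val_mk] at hs hsum ⊢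
    omega
  · rw [dif_neg hpos] at h
    exact absurd rfl h

lemma zd_mulO_xOd {f : O F p m n} {s : ℤ} (hf : inO s f) (j : Fin n) (μ : Mon p m n)
    (h : mulO f (xVar (Fin.natAdd m j)) μ ≠ 0) : (zdMon μ : ℤ) = s + 1 := by
  rw [mulO_xOd] at h
  by_cases hmem : j ∈ μ.2
  · rw [if_pos hmem] at h
    have hfne : f (μ.1, μ.2.erase j) ≠ 0 := fun h0 => h (by rw [h0, mul_zero])
    have hs := hf _ hfne
    have hcard := Finset.card_erase_of_mem hmem
    have hcpos : 0 < μ.2.card := Finset.card_pos.2 ⟨j, hmem⟩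
    simp only [zdMon, hcard] at hs ⊢
    omega
  · rw [if_neg hmem] at h
    exact absurd rfl h

lemma fEuler_inW {f : O F p m n} {s : ℤ} (hf : inO s f) : inW s (fEuler f) := by
  intro i μ h
  obtain ⟨x, rfl⟩ := finSumFinEquiv.surjective i
  cases x with
  | inl j => exact zd_mulO_xEv hf j μ h
  | inr j => exact zd_mulO_xOd hf j μ h

lemma projO_sub (b : ZMod 2) (f g : O F p m n) :
    projO b (f - g) = projO b f - projO b g := by
  funext μ
  simp only [projO, Pi.sub_apply]
  split_ifs <;> simp

lemma pd_apply_sub (i : Fin (m + n)) (f g : O F p m n) (μ : Mon p m n) :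
    pd i (f - g) μ = pd i f μ - pd i g μ := by
  obtain ⟨x, rfl⟩ := finSumFinEquiv.surjective i
  cases x with
  | inl j =>
    simp only [finSumFinEquiv_apply_left, pd, finSumFinEquiv_symm_apply_castAdd, Sum.elim_inl, dEv,
      Pi.sub_apply]
    split_ifs <;> simp
  | inr j =>
    simp only [finSumFinEquiv_apply_right, pd, finSumFinEquiv_symm_apply_natAdd, Sum.elim_inr, dOd,
      Pi.sub_apply]
    split_ifs <;> [simp; ring]

lemma divW_sub (D E : W F p m n) : divW (D - E) = divW D - divW E := by
  funext μ
  simp only [divW, Finset.sum_apply, Pi.smul_apply, Pi.sub_apply, smul_eq_mul]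
  rw [← Finset.sum_sub_distrib]
  refine Finset.sum_congr rfl fun i _ => ?_
  rw [← Finset.sum_sub_distrib]
  refine Finset.sum_congr rfl fun b _ => ?_
  rw [projO_sub b (D i) (E i), pd_apply_sub]
  ring

lemma mulO_zero (g : O F p m n) : mulO (0 : O F p m n) g = 0 := by
  funext μ
  rw [mulO]
  refine Finset.sum_eq_zero fun ν _ => Finset.sum_eq_zero fun κ _ => ?_
  split_ifs
  · show _ * (0 : O F p m n) ν * _ = 0
    simp
  · rfl
end Aux

/-- with `W_s' = {D ∈ W_s : div D = 0}` and `W_s'' = {f𝔇 : f ∈ O_s}`: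
if `m - n + s ≢ 0 (mod p)` then `W_s = W_s' ⊕ W_s''` (existence of a decomposition and
zero intersection), while if `m - n + s ≡ 0 (mod p)` then `W_s'' ⊆ W_s'`. -/
theorem Wprime_decomposition (F : Type*) [Field F] (p m n : ℕ) [Fact p.Prime] [CharP F p]
    (hp : 3 < p) (s : ℤ) :
    ( ((m : ℤ) - (n : ℤ) + s) % (p : ℤ) ≠ 0 →
      (∀ D : W F p m n, inW s D →
        ∃ (D' : W F p m n) (f : O F p m n),
          inW s D' ∧ divW D' = 0 ∧ inO s f ∧ D = D' + fEuler f) ∧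
      (∀ D₀ : W F p m n, inW s D₀ → divW D₀ = 0 →
        ∀ f : O F p m n, inO s f → D₀ = fEuler f → D₀ = 0) ) ∧
    ( ((m : ℤ) - (n : ℤ) + s) % (p : ℤ) = 0 →
      ∀ f : O F p m n, inO s f → divW (fEuler f) = 0 ) := by
  constructor
  · intro hmod
    have hdvd : ¬ ((p : ℤ) ∣ ((m : ℤ) - n + s)) := fun hd => hmod (Int.emod_eq_zero_of_dvd hd)
    have hc : (((m : ℤ) - n + s : ℤ) : F) ≠ 0 := by
      rw [Ne, CharP.intCast_eq_zero_iff F p]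
      exact hdvd
    constructor
    · intro D hD
      set c : F := (((m : ℤ) - n + s : ℤ) : F) with hcdef
      set g : O F p m n := fun μ => c⁻¹ * divW D μ with hg
      have hgdeg : inO s g := by
        intro μ h
        refine divW_support D s hD μ fun h0 => h ?_
        rw [hg]
        simp [h0]
      have hfe : divW (fEuler g) = divW D := by
        funext μ
        rw [divW_fEuler]
        by_cases h0 : divW D μ = 0
        · show _ * (c⁻¹ * divW D μ) = divW D μ
          rw [h0, mul_zero, mul_zero]
        · have hz := divW_support D s hD μ h0
          show (((m : ℤ) - n + (zdMon μ : ℤ) : ℤ) : F) * (c⁻¹ * divW D μ) = divW D μ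
          rw [hz, ← hcdef, ← mul_assoc, mul_inv_cancel₀ hc, one_mul]
      refine ⟨D - fEuler g, g, ?_, ?_, hgdeg, (sub_add_cancel D (fEuler g)).symm⟩
      · exact (Wgrade F p m n s).sub_mem hD (fEuler_inW hgdeg)
      · rw [divW_sub, hfe, sub_self]
    · intro D₀ hD₀ hdiv f hf heq
      have hf0 : f = 0 := by
        funext μ
        by_contra hne
        have hkey : divW (fEuler f) μ = (((m : ℤ) - n + s : ℤ) : F) * f μ := by
          rw [divW_fEuler, hf μ hne]
        rw [← heq, hdiv] at hkey
        exact hne (by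
          have : (((m : ℤ) - n + s : ℤ) : F) * f μ = 0 := hkey.symm
          exact (mul_eq_zero.1 this).resolve_left hc)
      rw [heq, hf0]
      funext i
      exact mulO_zero (xVar i)
  · intro hmod f hf
    have hc : (((m : ℤ) - n + s : ℤ) : F) = 0 := by
      rw [CharP.intCast_eq_zero_iff F p]
      exact Int.dvd_of_emod_eq_zero hmod
    funext μ
    rw [divW_fEuler]
    by_cases h0 : f μ = 0
    · rw [h0, mul_zero]
      rfl
    · rw [hf μ h0, hc, zero_mul]
      rfl

end Cartan
end

section
/- The null component S(m,n)_0 of the special Lie superalgebra is isomorphic, as a Lie superalgebra, to sl(m,n), the subalgebra of gl(m,n) consisting of matrices of supertrace zero. -/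
open Finset

namespace Cartan

variable {F : Type*} [Field F] {p m n : ℕ}

/-- Projection of a matrix onto its parity-`a` part (entry `(i,j)` has parity
`|i| + |j|` for the `gl(m,n)` block grading). -/
def projM (F : Type*) [Field F] (m : ℕ) {k : ℕ} (a : ZMod 2)
    (X : Matrix (Fin k) (Fin k) F) : Matrix (Fin k) (Fin k) F :=
  fun i j => if parIdx m i + parIdx m j = a then X i j else 0

/-- Super-commutator on `gl(m,n)`, extended bilinearly from homogeneous parts. -/
def superComm (F : Type*) [Field F] (m : ℕ) {k : ℕ}
    (X Y : Matrix (Fin k) (Fin k) F) : Matrix (Fin k) (Fin k) F :=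
  ∑ a : ZMod 2, ∑ b : ZMod 2,
    (projM F m a X * projM F m b Y
      - ((-1 : F)) ^ (a * b).val • (projM F m b Y * projM F m a X))

/-- Supertrace of a matrix for the `gl(m,n)` block grading. -/
def strM (F : Type*) [Field F] (m : ℕ) {k : ℕ} (X : Matrix (Fin k) (Fin k) F) : F :=
  ∑ i : Fin k, (if (i : ℕ) < m then X i i else - X i i)

/-- `sl(m,n)`: matrices of supertrace zero, as a submodule of `gl(m,n)`. -/
def slSub (F : Type*) [Field F] (m n : ℕ) :
    Submodule F (Matrix (Fin (m + n)) (Fin (m + n)) F) where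
  carrier := {X | strM F m X = 0}
  add_mem' := by
    intro X Y hX hY
    have h : strM F m (X + Y) = strM F m X + strM F m Y := by
      simp only [strM, Matrix.add_apply, ← Finset.sum_add_distrib]
      exact Finset.sum_congr rfl fun i _ => by split <;> ring
    simp only [Set.mem_setOf_eq] at *
    rw [h, hX, hY, add_zero]
  zero_mem' := by simp [strM]
  smul_mem' := by
    intro c X hX
    have h : strM F m (c • X) = c * strM F m X := by
      simp only [strM, Matrix.smul_apply, smul_eq_mul, Finset.mul_sum]
      exact Finset.sum_congr rfl fun i _ => by split <;> ring
    simp only [Set.mem_setOf_eq] at *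
    rw [h, hX, mul_zero]


lemma projO_add (b : ZMod 2) (f g : O F p m n) :
    projO b (f + g) = projO b f + projO b g := by
  funext μ; simp only [projO, Pi.add_apply]; split <;> simp

lemma projO_smul (b : ZMod 2) (c : F) (f : O F p m n) :
    projO b (c • f) = c • projO b f := by
  funext μ; simp only [projO, Pi.smul_apply, smul_eq_mul]; split <;> simp

lemma dEv_add [NeZero p] (i : Fin m) (f g : O F p m n) :
    dEv i (f + g) = dEv i f + dEv i g := by
  funext μ; simp only [dEv, Pi.add_apply]; split <;> simp

lemma dOd_add (i : Fin n) (f g : O F p m n) :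
    dOd i (f + g) = dOd i f + dOd i g := by
  funext μ; simp only [dOd, Pi.add_apply]; split
  · simp
  · ring

lemma dEv_smul [NeZero p] (i : Fin m) (c : F) (f : O F p m n) :
    dEv i (c • f) = c • dEv i f := by
  funext μ; simp only [dEv, Pi.smul_apply, smul_eq_mul]; split <;> simp

lemma dOd_smul (i : Fin n) (c : F) (f : O F p m n) :
    dOd i (c • f) = c • dOd i f := by
  funext μ; simp only [dOd, Pi.smul_apply, smul_eq_mul]; split
  · simp
  · ring

lemma pd_add [NeZero p] (i : Fin (m + n)) (f g : O F p m n) :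
    pd i (f + g) = pd i f + pd i g := by
  unfold pd
  cases finSumFinEquiv.symm i with
  | inl j => exact dEv_add j f g
  | inr j => exact dOd_add j f g

lemma pd_smul [NeZero p] (i : Fin (m + n)) (c : F) (f : O F p m n) :
    pd i (c • f) = c • pd i f := by
  unfold pd
  cases finSumFinEquiv.symm i with
  | inl j => exact dEv_smul j c f
  | inr j => exact dOd_smul j c f

lemma divW_add [NeZero p] (D E : W F p m n) :
    divW (D + E) = divW D + divW E := by
  unfold divW
  rw [← Finset.sum_add_distrib]
  refine Finset.sum_congr rfl fun i _ => ?_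
  rw [← Finset.sum_add_distrib]
  refine Finset.sum_congr rfl fun b _ => ?_
  rw [show (D + E) i = D i + E i from rfl, projO_add, pd_add, smul_add]

lemma divW_smul [NeZero p] (c : F) (D : W F p m n) :
    divW (c • D) = c • divW D := by
  unfold divW
  rw [Finset.smul_sum]
  refine Finset.sum_congr rfl fun i _ => ?_
  rw [Finset.smul_sum]
  refine Finset.sum_congr rfl fun b _ => ?_
  rw [show (c • D) i = c • D i from rfl, projO_smul, pd_smul, smul_comm]

lemma divW_zero [NeZero p] : divW (0 : W F p m n) = 0 := by
  have := divW_smul (0 : F) (0 : W F p m n)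
  simpa using this

/-- `S(m,n)₀`: the null component of the special superalgebra, realized as the
divergence-free part of `W₀`. -/
def S0 (F : Type*) [Field F] (p m n : ℕ) [Fact p.Prime] : Submodule F (W F p m n) where
  carrier := {D | inW 0 D ∧ divW D = 0}
  add_mem' := by
    intro a b ha hb
    refine ⟨(Wgrade F p m n 0).add_mem ha.1 hb.1, ?_⟩
    rw [divW_add, ha.2, hb.2, add_zero]
  zero_mem' := by
    exact ⟨(Wgrade F p m n 0).zero_mem, divW_zero⟩
  smul_mem' := by
    intro c a ha
    refine ⟨(Wgrade F p m n 0).smul_mem c ha.1, ?_⟩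
    rw [divW_smul, ha.2, smul_zero]

/-! ### Auxiliary development for `S0_iso_sl` -/

/-- The monomial corresponding to the variable `x_j`. -/
def monOf (p m n : ℕ) [NeZero p] (j : Fin (m + n)) : Mon p m n :=
  if h : (j : ℕ) < m then (Pi.single (⟨j, h⟩ : Fin m) 1, ∅)
  else (0, {(⟨(j : ℕ) - m, by have := j.isLt; omega⟩ : Fin n)})

lemma xVar_apply [NeZero p] (j : Fin (m + n)) (μ : Mon p m n) :
    (xVar j : O F p m n) μ = if μ = monOf p m n j then 1 else 0 := by
  unfold xVar monOf
  by_cases hj : (j : ℕ) < m <;> simp [hj, Prod.ext_iff]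

lemma val_one_p [NeZero p] (hp1 : 1 < p) : ((1 : Fin p) : ℕ) = 1 := by
  simp [Fin.val_one', Nat.mod_eq_of_lt hp1]

lemma monOf_castAdd [NeZero p] (i : Fin m) :
    monOf p m n (Fin.castAdd n i) = (Pi.single i 1, ∅) := by
  simp [monOf, i.isLt]

lemma monOf_natAdd [NeZero p] (i : Fin n) :
    monOf p m n (Fin.natAdd m i) = (0, {i}) := by
  have h : ¬ (m + (i : ℕ) < m) := by omega
  simp [monOf, h]

lemma zdMon_monOf [NeZero p] (hp1 : 1 < p) (j : Fin (m + n)) :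
    zdMon (monOf p m n j : Mon p m n) = 1 := by
  unfold zdMon monOf
  by_cases hj : (j : ℕ) < m
  · rw [dif_pos hj]
    simp only [Finset.card_empty, add_zero]
    rw [Finset.sum_eq_single (⟨(j : ℕ), hj⟩ : Fin m)]
    · rw [Pi.single_eq_same]
      exact val_one_p (p := p) hp1
    · intro i _ hi
      simp [Pi.single_eq_of_ne hi]
    · simp
  · rw [dif_neg hj]
    simp

lemma parMon_monOf [NeZero p] (j : Fin (m + n)) :
    parMon (monOf p m n j : Mon p m n) = parIdx m j := by
  unfold parMon monOf parIdx
  by_cases hj : (j : ℕ) < m <;> simp [hj]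

lemma monOf_injective [NeZero p] (hp1 : 1 < p) :
    Function.Injective (monOf p m n) := by
  intro j l h
  unfold monOf at h
  by_cases hj : (j : ℕ) < m <;> by_cases hl : (l : ℕ) < m
  · rw [dif_pos hj, dif_pos hl, Prod.mk.injEq] at h
    by_contra hne
    have hne' : (⟨(j : ℕ), hj⟩ : Fin m) ≠ ⟨(l : ℕ), hl⟩ := by
      intro hq
      have hval : (j : ℕ) = (l : ℕ) := congrArg (fun x : Fin m => (x : ℕ)) hq
      exact hne (Fin.ext hval)
    have h1 := congrFun h.1 (⟨(j : ℕ), hj⟩ : Fin m)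
    rw [Pi.single_eq_same, Pi.single_eq_of_ne hne'] at h1
    have h2 := congrArg Fin.val h1
    rw [val_one_p (p := p) hp1, Fin.val_zero] at h2
    exact one_ne_zero h2
  · rw [dif_pos hj, dif_neg hl, Prod.mk.injEq] at h
    exact absurd h.2 (Ne.symm (Finset.singleton_ne_empty _))
  · rw [dif_neg hj, dif_pos hl, Prod.mk.injEq] at h
    exact absurd h.2 (Finset.singleton_ne_empty _)
  · rw [dif_neg hj, dif_neg hl, Prod.mk.injEq] at h
    have h2 := Finset.singleton_injective h.2
    have hv : (j : ℕ) - m = (l : ℕ) - m := congrArg Fin.val h2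
    ext
    omega

/-! Bundled linear maps -/

def projOL (b : ZMod 2) : O F p m n →ₗ[F] O F p m n where
  toFun := projO b
  map_add' := projO_add b
  map_smul' := projO_smul b

def pdL [NeZero p] (i : Fin (m + n)) : O F p m n →ₗ[F] O F p m n where
  toFun := pd i
  map_add' := pd_add i
  map_smul' := pd_smul i

def mulOR [NeZero p] (f : O F p m n) : O F p m n →ₗ[F] O F p m n where
  toFun g := mulO f g
  map_add' g h := by
    funext μ
    simp only [mulO, Pi.add_apply]
    rw [← Finset.sum_add_distrib]
    refine Finset.sum_congr rfl fun ν _ => ?_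
    rw [← Finset.sum_add_distrib]
    refine Finset.sum_congr rfl fun κ _ => ?_
    split <;> ring
  map_smul' c g := by
    funext μ
    simp only [mulO, Pi.smul_apply, smul_eq_mul, RingHom.id_apply]
    rw [Finset.mul_sum]
    refine Finset.sum_congr rfl fun ν _ => ?_
    rw [Finset.mul_sum]
    refine Finset.sum_congr rfl fun κ _ => ?_
    split <;> ring

lemma projO_sum {ι : Type*} (b : ZMod 2) (s : Finset ι) (f : ι → O F p m n) :
    projO b (∑ j ∈ s, f j) = ∑ j ∈ s, projO b (f j) :=
  map_sum (projOL (F := F) (p := p) (m := m) (n := n) b) f s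

lemma pd_sum [NeZero p] {ι : Type*} (i : Fin (m + n)) (s : Finset ι) (f : ι → O F p m n) :
    pd i (∑ j ∈ s, f j) = ∑ j ∈ s, pd i (f j) :=
  map_sum (pdL (F := F) i) f s

lemma pd_zero [NeZero p] (i : Fin (m + n)) : pd i (0 : O F p m n) = 0 :=
  map_zero (pdL (F := F) i)

lemma mulO_zero_right [NeZero p] (f : O F p m n) : mulO f (0 : O F p m n) = 0 :=
  map_zero (mulOR f)

lemma mulO_oneO [NeZero p] (f : O F p m n) : mulO f (oneO F p m n) = f := by
  funext μ
  unfold mulO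
  have h1 : ∀ ν : Mon p m n,
      (∑ κ : Mon p m n,
        if (∀ i, (ν.1 i : ℕ) + (κ.1 i : ℕ) = (μ.1 i : ℕ)) ∧ ν.2 ∩ κ.2 = ∅ ∧ ν.2 ∪ κ.2 = μ.2 then
          ((extSign ν.2 κ.2 : ℤ) : F) * (∏ i, (((μ.1 i : ℕ).choose (ν.1 i : ℕ) : ℕ) : F))
            * f ν * oneO F p m n κ
        else 0)
      = if ν = μ then f μ else 0 := by
    intro ν
    rw [Finset.sum_eq_single ((0, ∅) : Mon p m n)]
    · by_cases hν : ν = μ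
      · subst hν
        rw [if_pos, if_pos rfl]
        · simp [oneO, extSign, Nat.choose_self]
        · exact ⟨fun i => by simp, by simp, by simp⟩
      · rw [if_neg, if_neg hν]
        rintro ⟨hc1, -, hc3⟩
        apply hν
        refine Prod.ext_iff.mpr ⟨funext fun i => Fin.ext ?_, ?_⟩
        · have := hc1 i; simpa using this
        · simpa using hc3
    · intro κ _ hκ
      have hz : oneO F p m n κ = 0 := by
        unfold oneO
        rw [if_neg]
        rintro ⟨a, b⟩
        exact hκ (Prod.ext_iff.mpr ⟨a, b⟩)
      split
      · rw [hz, mul_zero]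
      · rfl
    · simp
  exact (Finset.sum_congr rfl fun ν _ => h1 ν).trans (by simp)

/-! `pd` on variables -/

lemma dEv_xVar [NeZero p] (hp1 : 1 < p) (i : Fin m) (j : Fin (m + n)) :
    dEv i (xVar j : O F p m n) = if (j : ℕ) = (i : ℕ) then oneO F p m n else 0 := by
  funext μ
  by_cases hij : (j : ℕ) = (i : ℕ)
  · rw [if_pos hij]
    have hj : (j : ℕ) < m := hij ▸ i.isLt
    have hii : (⟨(j : ℕ), hj⟩ : Fin m) = i := Fin.ext hij
    unfold dEv oneO
    by_cases hc : μ.1 = 0 ∧ μ.2 = (∅ : Finset (Fin n))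
    · rw [if_pos hc]
      obtain ⟨h1, h2⟩ := hc
      have hlt : ((μ.1 i : ℕ)) + 1 < p := by
        rw [h1]
        simpa using hp1
      have hupd : Function.update μ.1 i ⟨(μ.1 i : ℕ) + 1, hlt⟩ = Pi.single i (1 : Fin p) := by
        funext k
        by_cases hk : k = i
        · subst hk
          rw [Function.update_self, Pi.single_eq_same]
          apply Fin.ext
          show (μ.1 k : ℕ) + 1 = ((1 : Fin p) : ℕ)
          rw [val_one_p (p := p) hp1, congrFun h1 k]
          simp
        · rw [Function.update_of_ne hk, Pi.single_eq_of_ne hk]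
          exact congrFun h1 k
      have hcond : ((Function.update μ.1 i ⟨(μ.1 i : ℕ) + 1, hlt⟩, μ.2) : Mon p m n)
          = monOf p m n j := by
        unfold monOf
        rw [dif_pos hj, hii]
        exact Prod.ext_iff.mpr ⟨hupd, h2⟩
      rw [dif_pos hlt, xVar_apply, if_pos hcond]
    · rw [if_neg hc]
      split
      · rename_i hlt
        rw [xVar_apply]
        have hne : ((Function.update μ.1 i ⟨(μ.1 i : ℕ) + 1, hlt⟩, μ.2) : Mon p m n)
            ≠ monOf p m n j := by
          intro heq
          apply hc
          unfold monOf at heq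
          rw [dif_pos hj, hii, Prod.ext_iff] at heq
          have e1 : Function.update μ.1 i ⟨(μ.1 i : ℕ) + 1, hlt⟩ = Pi.single i (1 : Fin p) :=
            heq.1
          have e2 : μ.2 = (∅ : Finset (Fin n)) := heq.2
          refine ⟨funext fun k => ?_, e2⟩
          by_cases hk : k = i
          · subst hk
            have h3 := congrFun e1 k
            rw [Function.update_self, Pi.single_eq_same] at h3
            have h4 : (μ.1 k : ℕ) + 1 = ((1 : Fin p) : ℕ) := congrArg Fin.val h3
            rw [val_one_p (p := p) hp1] at h4
            apply Fin.ext
            show (μ.1 k : ℕ) = ((0 : Fin p) : ℕ)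
            rw [Fin.val_zero]
            omega
          · have h3 := congrFun e1 k
            rw [Function.update_of_ne hk, Pi.single_eq_of_ne hk] at h3
            exact h3
        rw [if_neg hne]
      · rfl
  · rw [if_neg hij]
    unfold dEv
    split
    · rename_i hlt
      rw [xVar_apply]
      have hne : ((Function.update μ.1 i ⟨(μ.1 i : ℕ) + 1, hlt⟩, μ.2) : Mon p m n)
          ≠ monOf p m n j := by
        intro heq
        unfold monOf at heq
        by_cases hj : (j : ℕ) < m
        · rw [dif_pos hj, Prod.ext_iff] at heq
          have e1 : Function.update μ.1 i ⟨(μ.1 i : ℕ) + 1, hlt⟩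
              = Pi.single (⟨(j : ℕ), hj⟩ : Fin m) (1 : Fin p) := heq.1
          have h3 := congrFun e1 i
          have hne' : i ≠ (⟨(j : ℕ), hj⟩ : Fin m) := by
            intro hq
            exact hij (show (j : ℕ) = (i : ℕ) from (congrArg Fin.val hq).symm)
          rw [Function.update_self, Pi.single_eq_of_ne hne'] at h3
          have h4 : (μ.1 i : ℕ) + 1 = ((0 : Fin p) : ℕ) := congrArg Fin.val h3
          rw [Fin.val_zero] at h4
          omega
        · rw [dif_neg hj, Prod.ext_iff] at heq
          have e1 : Function.update μ.1 i ⟨(μ.1 i : ℕ) + 1, hlt⟩ = (0 : Fin m → Fin p) := heq.1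
          have h3 : Function.update μ.1 i ⟨(μ.1 i : ℕ) + 1, hlt⟩ i = (0 : Fin m → Fin p) i :=
            congrFun e1 i
          rw [Function.update_self] at h3
          have h4 : (μ.1 i : ℕ) + 1 = ((0 : Fin p) : ℕ) := congrArg Fin.val h3
          rw [Fin.val_zero] at h4
          omega
      rw [if_neg hne]
      rfl
    · rfl

lemma dOd_xVar [NeZero p] (i : Fin n) (j : Fin (m + n)) :
    dOd i (xVar j : O F p m n) = if (j : ℕ) = m + (i : ℕ) then oneO F p m n else 0 := by
  funext μ
  unfold dOd
  by_cases hij : (j : ℕ) = m + (i : ℕ)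
  · rw [if_pos hij]
    have hj : ¬ ((j : ℕ) < m) := by omega
    have hii : (⟨(j : ℕ) - m, by have := j.isLt; omega⟩ : Fin n) = i := by
      apply Fin.ext
      show (j : ℕ) - m = (i : ℕ)
      omega
    by_cases hmem : i ∈ μ.2
    · rw [if_pos hmem]
      unfold oneO
      have hne : ¬ (μ.1 = 0 ∧ μ.2 = (∅ : Finset (Fin n))) := by
        rintro ⟨-, h2⟩
        rw [h2] at hmem
        exact absurd hmem (Finset.notMem_empty i)
      rw [if_neg hne]
    · rw [if_neg hmem, xVar_apply]
      unfold oneO monOf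
      rw [dif_neg hj, hii]
      by_cases hc : μ.1 = 0 ∧ μ.2 = (∅ : Finset (Fin n))
      · obtain ⟨h1, h2⟩ := hc
        have hcond : ((μ.1, insert i μ.2) : Mon p m n) = ((0, {i}) : Mon p m n) := by
          refine Prod.ext_iff.mpr ⟨h1, ?_⟩
          show insert i μ.2 = {i}
          rw [h2]
          simp
        have hc12 : μ.1 = 0 ∧ μ.2 = (∅ : Finset (Fin n)) := ⟨h1, h2⟩
        rw [if_pos hcond, if_pos hc12, h2]
        simp
      · have hne2 : ((μ.1, insert i μ.2) : Mon p m n) ≠ ((0, {i}) : Mon p m n) := by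
          intro heq
          rw [Prod.ext_iff] at heq
          have e1 : μ.1 = 0 := heq.1
          have e2 : insert i μ.2 = ({i} : Finset (Fin n)) := heq.2
          apply hc
          refine ⟨e1, ?_⟩
          have hsub : μ.2 ⊆ {i} := e2 ▸ Finset.subset_insert i μ.2
          ext x
          simp only [Finset.notMem_empty, iff_false]
          intro hx
          have hx2 := hsub hx
          rw [Finset.mem_singleton] at hx2
          exact hmem (hx2 ▸ hx)
        rw [if_neg hc, if_neg hne2, mul_zero]
  · rw [if_neg hij]
    by_cases hmem : i ∈ μ.2
    · rw [if_pos hmem]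
      rfl
    · rw [if_neg hmem, xVar_apply]
      have hne : ((μ.1, insert i μ.2) : Mon p m n) ≠ monOf p m n j := by
        intro heq
        unfold monOf at heq
        by_cases hj : (j : ℕ) < m
        · rw [dif_pos hj, Prod.ext_iff] at heq
          have h2 : insert i μ.2 = (∅ : Finset (Fin n)) := heq.2
          simp at h2
        · rw [dif_neg hj, Prod.ext_iff] at heq
          have h2 : insert i μ.2 = ({(⟨(j : ℕ) - m, by have := j.isLt; omega⟩ : Fin n)} :
              Finset (Fin n)) := heq.2
          have hmem2 : i ∈ ({(⟨(j : ℕ) - m, by have := j.isLt; omega⟩ : Fin n)} :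
              Finset (Fin n)) := h2 ▸ Finset.mem_insert_self i μ.2
          rw [Finset.mem_singleton] at hmem2
          have hv : (i : ℕ) = (j : ℕ) - m := congrArg Fin.val hmem2
          omega
      rw [if_neg hne, mul_zero]
      rfl

lemma pd_xVar [NeZero p] (hp1 : 1 < p) (i j : Fin (m + n)) :
    pd i (xVar j : O F p m n) = if i = j then oneO F p m n else 0 := by
  unfold pd
  cases hs : finSumFinEquiv.symm i with
  | inl k =>
    simp only [Sum.elim_inl]
    have hi : (i : ℕ) = (k : ℕ) := by
      have h2 : i = finSumFinEquiv (Sum.inl k) := by rw [← hs, Equiv.apply_symm_apply]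
      rw [h2, finSumFinEquiv_apply_left]
      rfl
    rw [dEv_xVar hp1]
    have hiff : ((j : ℕ) = (k : ℕ)) ↔ i = j := by
      rw [Fin.ext_iff]
      omega
    simp only [hiff]
  | inr k =>
    simp only [Sum.elim_inr]
    have hi : (i : ℕ) = m + (k : ℕ) := by
      have h2 : i = finSumFinEquiv (Sum.inr k) := by rw [← hs, Equiv.apply_symm_apply]
      rw [h2, finSumFinEquiv_apply_right]
      rfl
    rw [dOd_xVar]
    have hiff : ((j : ℕ) = m + (k : ℕ)) ↔ i = j := by
      rw [Fin.ext_iff]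
      omega
    simp only [hiff]

lemma projO_xVar [NeZero p] (b : ZMod 2) (j : Fin (m + n)) :
    projO b (xVar j : O F p m n) = if parIdx m j = b then xVar j else 0 := by
  funext μ
  unfold projO
  rw [ite_apply]
  by_cases hμ : μ = monOf p m n j
  · subst hμ
    rw [parMon_monOf]
    by_cases hb : parIdx m j = b
    · rw [if_pos hb, if_pos hb]
    · rw [if_neg hb, if_neg hb]
      rfl
  · have hx : (xVar j : O F p m n) μ = 0 := by rw [xVar_apply, if_neg hμ]
    simp [hx]

/-! The action and the matrix correspondence -/

def actR [NeZero p] (D : W F p m n) : O F p m n →ₗ[F] O F p m n :=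
  ∑ i, (mulOR (D i)).comp (pdL i)

lemma act_eq_actR [NeZero p] (D : W F p m n) (g : O F p m n) : act D g = actR D g := by
  unfold act actR
  rw [LinearMap.sum_apply]
  rfl

lemma act_xVar [NeZero p] (hp1 : 1 < p) (D : W F p m n) (j : Fin (m + n)) :
    act D (xVar j) = D j := by
  unfold act
  rw [Finset.sum_eq_single j]
  · rw [pd_xVar hp1, if_pos rfl, mulO_oneO]
  · intro i _ hi
    rw [pd_xVar hp1, if_neg hi, mulO_zero_right]
  · simp

def wOf [NeZero p] (X : Matrix (Fin (m + n)) (Fin (m + n)) F) : W F p m n :=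
  fun k => ∑ j, X j k • (xVar j : O F p m n)

def matOf [NeZero p] (D : W F p m n) : Matrix (Fin (m + n)) (Fin (m + n)) F :=
  fun j k => D k (monOf p m n j)

lemma wOf_monOf [NeZero p] (hp1 : 1 < p) (X : Matrix (Fin (m + n)) (Fin (m + n)) F)
    (k l : Fin (m + n)) :
    (wOf X : W F p m n) k (monOf p m n l) = X l k := by
  unfold wOf
  rw [Finset.sum_apply, Finset.sum_eq_single l]
  · rw [Pi.smul_apply, xVar_apply, if_pos rfl, smul_eq_mul, mul_one]
  · intro j _ hj
    rw [Pi.smul_apply, xVar_apply, if_neg (fun hq => hj (monOf_injective hp1 hq).symm), smul_zero]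
  · simp

lemma matOf_wOf [NeZero p] (hp1 : 1 < p) (X : Matrix (Fin (m + n)) (Fin (m + n)) F) :
    matOf (wOf X : W F p m n) = X :=
  Matrix.ext fun l k => wOf_monOf hp1 X k l

lemma inW_wOf [NeZero p] (hp1 : 1 < p) (X : Matrix (Fin (m + n)) (Fin (m + n)) F) :
    inW 0 (wOf X : W F p m n) := by
  intro k μ hμ
  unfold wOf at hμ
  rw [Finset.sum_apply] at hμ
  obtain ⟨j, -, hj⟩ := Finset.exists_ne_zero_of_sum_ne_zero hμ
  rw [Pi.smul_apply, smul_eq_mul] at hj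
  have hx : (xVar j : O F p m n) μ ≠ 0 := fun h0 => hj (by rw [h0, mul_zero])
  rw [xVar_apply] at hx
  have hμ' : μ = monOf p m n j := by
    by_contra hq
    exact hx (if_neg hq)
  rw [hμ', zdMon_monOf hp1]
  norm_num

lemma mon_deg_one [NeZero p] (hp1 : 1 < p) {μ : Mon p m n} (h : zdMon μ = 1) :
    ∃ j, μ = monOf p m n j := by
  unfold zdMon at h
  rcases Nat.lt_or_ge μ.2.card 1 with hc | hc
  · have h2 : μ.2 = ∅ := Finset.card_eq_zero.mp (by omega)
    have hne : (∑ i, ((μ.1 i : ℕ))) ≠ 0 := by omega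
    obtain ⟨i0, -, hi0⟩ := Finset.exists_ne_zero_of_sum_ne_zero hne
    have hkey : ∑ i ∈ Finset.univ.erase i0, ((μ.1 i : ℕ)) + ((μ.1 i0 : ℕ))
        = ∑ i, ((μ.1 i : ℕ)) :=
      Finset.sum_erase_add Finset.univ (fun i => ((μ.1 i : ℕ))) (Finset.mem_univ i0)
    have hv : (μ.1 i0 : ℕ) = 1 := by omega
    have hz : ∀ k, k ≠ i0 → (μ.1 k : ℕ) = 0 := by
      intro k hk
      have h0 : ∑ i ∈ Finset.univ.erase i0, ((μ.1 i : ℕ)) = 0 := by omega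
      exact Finset.sum_eq_zero_iff.mp h0 k (Finset.mem_erase.mpr ⟨hk, Finset.mem_univ k⟩)
    refine ⟨Fin.castAdd n i0, ?_⟩
    rw [monOf_castAdd]
    have hupd : μ.1 = Pi.single i0 (1 : Fin p) := by
      funext k
      by_cases hk : k = i0
      · subst hk
        rw [Pi.single_eq_same]
        apply Fin.ext
        rw [hv, val_one_p (p := p) hp1]
      · rw [Pi.single_eq_of_ne hk]
        apply Fin.ext
        show (μ.1 k : ℕ) = ((0 : Fin p) : ℕ)
        rw [Fin.val_zero, hz k hk]
    exact Prod.ext_iff.mpr ⟨hupd, h2⟩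
  · have hcard : μ.2.card = 1 := by omega
    obtain ⟨a, ha⟩ := Finset.card_eq_one.mp hcard
    have hz : ∀ k, (μ.1 k : ℕ) = 0 := by
      intro k
      have h0 : (∑ i, ((μ.1 i : ℕ))) = 0 := by omega
      exact Finset.sum_eq_zero_iff.mp h0 k (Finset.mem_univ k)
    refine ⟨Fin.natAdd m a, ?_⟩
    rw [monOf_natAdd]
    have hupd : μ.1 = (0 : Fin m → Fin p) := by
      funext k
      apply Fin.ext
      show (μ.1 k : ℕ) = ((0 : Fin p) : ℕ)
      rw [Fin.val_zero, hz k]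
    exact Prod.ext_iff.mpr ⟨hupd, ha⟩

lemma wOf_matOf [NeZero p] (hp1 : 1 < p) {D : W F p m n} (hD : inW 0 D) :
    wOf (matOf D) = D := by
  funext k μ
  unfold wOf matOf
  rw [Finset.sum_apply]
  by_cases hz : zdMon μ = 1
  · obtain ⟨j0, rfl⟩ := mon_deg_one hp1 hz
    rw [Finset.sum_eq_single j0]
    · rw [Pi.smul_apply, xVar_apply, if_pos rfl, smul_eq_mul, mul_one]
    · intro j _ hj
      rw [Pi.smul_apply, xVar_apply, if_neg (fun hq => hj (monOf_injective hp1 hq).symm),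
        smul_zero]
    · simp
  · have hDμ : D k μ = 0 := by
      by_contra hne
      have h2 := hD k μ hne
      exact hz (by exact_mod_cast h2)
    rw [hDμ]
    refine Finset.sum_eq_zero fun j _ => ?_
    rw [Pi.smul_apply, xVar_apply, if_neg (fun hq => hz (by rw [hq, zdMon_monOf hp1])), smul_zero]

lemma zmod2_eq_add {x y a : ZMod 2} : x = a + y ↔ x + y = a := by
  revert x y a
  decide

lemma projW_wOf [NeZero p] (a : ZMod 2) (X : Matrix (Fin (m + n)) (Fin (m + n)) F) :
    projW a (wOf X : W F p m n) = wOf (projM F m a X) := by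
  funext k
  unfold projW wOf projM
  rw [projO_sum]
  refine Finset.sum_congr rfl fun j _ => ?_
  rw [projO_smul, projO_xVar]
  by_cases hc : parIdx m j + parIdx m k = a
  · rw [if_pos (zmod2_eq_add.mpr hc), if_pos hc]
  · rw [if_neg (fun hq => hc (zmod2_eq_add.mp hq)), if_neg hc, smul_zero, zero_smul]

lemma divW_wOf [NeZero p] (hp1 : 1 < p) (X : Matrix (Fin (m + n)) (Fin (m + n)) F) :
    divW (wOf X : W F p m n) = strM F m X • oneO F p m n := by
  unfold divW
  have step : ∀ (i : Fin (m + n)) (b : ZMod 2), pd i (projO b ((wOf X : W F p m n) i)) =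
      ∑ j, (if parIdx m j = b ∧ i = j then X j i • oneO F p m n else 0) := by
    intro i b
    unfold wOf
    rw [projO_sum, pd_sum]
    refine Finset.sum_congr rfl fun j _ => ?_
    rw [projO_smul, pd_smul, projO_xVar]
    by_cases hb : parIdx m j = b
    · rw [if_pos hb, pd_xVar hp1]
      by_cases hij : i = j
      · rw [if_pos hij, if_pos ⟨hb, hij⟩]
      · rw [if_neg hij, smul_zero, if_neg (fun hq => hij hq.2)]
    · rw [if_neg hb, pd_zero, smul_zero, if_neg (fun hq => hb hq.1)]
  have key : ∀ i : Fin (m + n),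
      (∑ b : ZMod 2, ((-1 : F)) ^ (b * parIdx m i).val • pd i (projO b ((wOf X : W F p m n) i)))
      = (if (i : ℕ) < m then X i i else - X i i) • oneO F p m n := by
    intro i
    have h1 : ∀ b : ZMod 2,
        ((-1 : F)) ^ (b * parIdx m i).val • pd i (projO b ((wOf X : W F p m n) i))
        = ((-1 : F)) ^ (b * parIdx m i).val •
            (if parIdx m i = b then X i i • oneO F p m n else 0) := by
      intro b
      rw [step i b]
      congr 1
      rw [Finset.sum_eq_single i]
      · by_cases hb : parIdx m i = b
        · rw [if_pos ⟨hb, rfl⟩, if_pos hb]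
        · rw [if_neg (fun hq => hb hq.1), if_neg hb]
      · intro j _ hj
        rw [if_neg (fun hq => hj hq.2.symm)]
      · simp
    rw [Finset.sum_congr rfl fun b _ => h1 b]
    rw [Finset.sum_eq_single (parIdx m i)]
    · rw [if_pos rfl]
      unfold parIdx
      by_cases hi : (i : ℕ) < m
      · rw [if_pos hi, if_pos hi]
        rw [show (((0 : ZMod 2) * 0).val) = 0 from rfl, pow_zero, one_smul]
      · rw [if_neg hi, if_neg hi]
        rw [show (((1 : ZMod 2) * 1).val) = 1 from rfl, pow_one, smul_smul, neg_one_mul, neg_smul]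
    · intro b _ hb
      rw [if_neg (fun hq => hb hq.symm), smul_zero]
    · simp
  rw [Finset.sum_congr rfl fun i _ => key i, ← Finset.sum_smul]
  rfl

lemma act_wOf [NeZero p] (hp1 : 1 < p) (A B : Matrix (Fin (m + n)) (Fin (m + n)) F)
    (k l : Fin (m + n)) :
    act (wOf A : W F p m n) ((wOf B : W F p m n) k) (monOf p m n l) = (A * B) l k := by
  have h1 : act (wOf A : W F p m n) ((wOf B : W F p m n) k)
      = ∑ j, B j k • act (wOf A : W F p m n) (xVar j) := by
    rw [act_eq_actR]
    rw [show ((wOf B : W F p m n) k) = ∑ j, B j k • (xVar j : O F p m n) from rfl]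
    rw [map_sum]
    refine Finset.sum_congr rfl fun j _ => ?_
    rw [LinearMap.map_smul, ← act_eq_actR]
  rw [h1]
  simp only [act_xVar hp1]
  rw [Finset.sum_apply, Matrix.mul_apply]
  refine Finset.sum_congr rfl fun j _ => ?_
  rw [Pi.smul_apply, wOf_monOf hp1, smul_eq_mul, mul_comm]

lemma matOf_bracket [NeZero p] (hp1 : 1 < p) (X Y : Matrix (Fin (m + n)) (Fin (m + n)) F) :
    matOf (bracketW (wOf X) (wOf Y) : W F p m n) = superComm F m X Y := by
  refine Matrix.ext fun l k => ?_
  show (bracketW (wOf X) (wOf Y) : W F p m n) k (monOf p m n l) = _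
  unfold bracketW superComm
  simp only [Finset.sum_apply, Matrix.sum_apply, Pi.sub_apply, Pi.smul_apply,
    Matrix.sub_apply, Matrix.smul_apply, smul_eq_mul, projW_wOf]
  refine Finset.sum_congr rfl fun a _ => Finset.sum_congr rfl fun b _ => ?_
  rw [act_wOf hp1, act_wOf hp1]

/-- `S(m,n)₀ ≅ sl(m,n)` as Lie superalgebras. -/
theorem S0_iso_sl (F : Type*) [Field F] (p m n : ℕ) [Fact p.Prime] [CharP F p]
    (hp : 3 < p) (hm : 2 ≤ m) (hn : 2 ≤ n) :
    ∃ e : (S0 F p m n) ≃ₗ[F] (slSub F m n),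
      ∀ D E B : S0 F p m n,
        (B : W F p m n) = bracketW (D : W F p m n) (E : W F p m n) →
        (e B : Matrix (Fin (m + n)) (Fin (m + n)) F) = superComm F m (e D) (e E) := by
  have hp1 : 1 < p := by omega
  have memSl : ∀ D : S0 F p m n, matOf (D : W F p m n) ∈ slSub F m n := by
    intro D
    obtain ⟨hD1, hD2⟩ := D.2
    have hW : wOf (matOf (D : W F p m n)) = (D : W F p m n) := wOf_matOf hp1 hD1
    have hdiv : strM F m (matOf (D : W F p m n)) • oneO F p m n = 0 := by
      rw [← divW_wOf hp1, hW]
      exact hD2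
    have h0 := congrFun hdiv ((0, ∅) : Mon p m n)
    simp only [Pi.smul_apply, Pi.zero_apply, smul_eq_mul] at h0
    have h1 : oneO F p m n ((0, ∅) : Mon p m n) = 1 := by
      unfold oneO
      rw [if_pos ⟨rfl, rfl⟩]
    rw [h1, mul_one] at h0
    exact h0
  have memS0 : ∀ X : slSub F m n,
      wOf (X : Matrix (Fin (m + n)) (Fin (m + n)) F) ∈ S0 F p m n := by
    intro X
    show inW 0 (wOf (X : Matrix (Fin (m + n)) (Fin (m + n)) F) : W F p m n) ∧
      divW (wOf (X : Matrix (Fin (m + n)) (Fin (m + n)) F) : W F p m n) = 0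
    refine ⟨inW_wOf hp1 _, ?_⟩
    rw [divW_wOf hp1,
      show strM F m (X : Matrix (Fin (m + n)) (Fin (m + n)) F) = 0 from X.2, zero_smul]
  refine ⟨{ toFun := fun D => ⟨matOf (D : W F p m n), memSl D⟩
            map_add' := fun D E => Subtype.ext rfl
            map_smul' := fun c D => Subtype.ext rfl
            invFun := fun X => ⟨wOf (X : Matrix (Fin (m + n)) (Fin (m + n)) F), memS0 X⟩
            left_inv := ?_
            right_inv := fun X => Subtype.ext (matOf_wOf hp1 _) }, ?_⟩
  · intro D
    obtain ⟨hD1, hD2⟩ := D.2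
    exact Subtype.ext (wOf_matOf hp1 hD1)
  · intro D E B hB
    obtain ⟨hD1, hD2⟩ := D.2
    obtain ⟨hE1, hE2⟩ := E.2
    show matOf (B : W F p m n)
      = superComm F m (matOf (D : W F p m n)) (matOf (E : W F p m n))
    rw [hB]
    conv_lhs =>
      rw [show (D : W F p m n) = wOf (matOf (D : W F p m n)) from (wOf_matOf hp1 hD1).symm,
        show (E : W F p m n) = wOf (matOf (E : W F p m n)) from (wOf_matOf hp1 hE1).symm]
    exact matOf_bracket hp1 _ _

end Cartan
end
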